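/- Let π ∈ S_n, 1 ≤ k ≤ n−1, with reduced decomposition (i_1,…,i_l), and suppose π(j) < π(n) for all k ≤ j ≤ n−1. Then (i_1,…,i_l, n−1, n−2, …, k) is a reduced decomposition of π s_{n−1} s_{n−2} ⋯ s_k. -/
import Mathlib


namespace Stmt

/-- The adjacent transposition `s_{i+1} = (i, i+1)` (0-based) in the symmetric group on
`Fin m`; indices out of range give the identity. -/
def sNat (m i : ℕ) : Equiv.Perm (Fin m) :=
  if h : i + 1 < m then Equiv.swap ⟨i, by omega⟩ ⟨i + 1, h⟩ else 1

/-- The permutation represented by a word in the adjacent transpositions. -/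
def toPerm (m : ℕ) (l : List ℕ) : Equiv.Perm (Fin m) := (l.map (sNat m)).prod

/-- `l` is a reduced decomposition of `π`: it represents `π` and has minimal length among
all words representing `π`. -/
def IsReduced (m : ℕ) (l : List ℕ) (π : Equiv.Perm (Fin m)) : Prop :=
  toPerm m l = π ∧ ∀ l' : List ℕ, toPerm m l' = π → l.length ≤ l'.length

end Stmt

namespace Stmt

/-- Number of inversions of a permutation. -/
def inv (m : ℕ) (σ : Equiv.Perm (Fin m)) : ℕ :=
  (Finset.univ.filter (fun p : Fin m × Fin m => p.1 < p.2 ∧ σ p.2 < σ p.1)).card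

theorem toPerm_append (m : ℕ) (l1 l2 : List ℕ) :
    toPerm m (l1 ++ l2) = toPerm m l1 * toPerm m l2 := by
  simp [toPerm]

theorem toPerm_nil (m : ℕ) : toPerm m [] = 1 := by simp [toPerm]

theorem toPerm_singleton (m i : ℕ) : toPerm m [i] = sNat m i := by simp [toPerm]

theorem inv_one (m : ℕ) : inv m 1 = 0 := by
  simp only [inv, Finset.card_eq_zero, Finset.filter_eq_empty_iff]
  intro p _
  rintro ⟨h1, h2⟩
  exact absurd (h1.trans h2) (lt_irrefl _)

section swaplemmas

variable (m i : ℕ) (h : i + 1 < m) (σ : Equiv.Perm (Fin m))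

private def A : Fin m := ⟨i, by omega⟩
private def B : Fin m := ⟨i + 1, h⟩

theorem swap_val (z : Fin m) :
    ((Equiv.swap (A m i h) (B m i h) z : Fin m) : ℕ) =
      if (z : ℕ) = i then i + 1 else if (z : ℕ) = i + 1 then i else z := by
  rcases eq_or_ne z (A m i h) with rfl | hza
  · simp [A, B, Equiv.swap_apply_left]
  · rcases eq_or_ne z (B m i h) with rfl | hzb
    · rw [Equiv.swap_apply_right]
      simp [A, B]
    · rw [Equiv.swap_apply_of_ne_of_ne hza hzb]
      have h1 : (z : ℕ) ≠ i := fun hh => hza (Fin.ext hh)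
      have h2 : (z : ℕ) ≠ i + 1 := fun hh => hzb (Fin.ext hh)
      simp [h1, h2]

theorem swap_lt {x y : Fin m} (hxy : x < y) (hne : ¬(x = A m i h ∧ y = B m i h)) :
    Equiv.swap (A m i h) (B m i h) x < Equiv.swap (A m i h) (B m i h) y := by
  have hx := swap_val m i h x
  have hy := swap_val m i h y
  have hxy' : (x : ℕ) < y := hxy
  have hne' : ¬((x : ℕ) = i ∧ (y : ℕ) = i + 1) := by
    rintro ⟨h1, h2⟩; exact hne ⟨Fin.ext h1, Fin.ext h2⟩
  rw [Fin.lt_iff_val_lt_val, hx, hy]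
  split_ifs <;> omega

/-- Core cardinality identity. -/
theorem card_core :
    ((Finset.univ.filter (fun p : Fin m × Fin m =>
        p.1 < p.2 ∧ (σ * Equiv.swap (A m i h) (B m i h)) p.2 <
          (σ * Equiv.swap (A m i h) (B m i h)) p.1)).erase (A m i h, B m i h)).card =
    ((Finset.univ.filter (fun p : Fin m × Fin m =>
        p.1 < p.2 ∧ σ p.2 < σ p.1)).erase (A m i h, B m i h)).card := by
  set s := Equiv.swap (A m i h) (B m i h) with hs
  have hab : A m i h < B m i h := by simp [A, B, Fin.lt_iff_val_lt_val]
  apply Finset.card_bij' (fun p _ => (s p.1, s p.2)) (fun p _ => (s p.1, s p.2))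
  · intro p hp
    simp only [Finset.mem_erase, Finset.mem_filter, Finset.mem_univ, true_and] at hp ⊢
    obtain ⟨hpne, hplt, hpinv⟩ := hp
    have hne2 : ¬(p.1 = A m i h ∧ p.2 = B m i h) := by
      rintro ⟨h1, h2⟩; exact hpne (Prod.ext h1 h2)
    refine ⟨?_, swap_lt m i h hplt hne2, ?_⟩
    · rintro he
      have h1 : s p.1 = A m i h := congrArg Prod.fst he
      have h2 : s p.2 = B m i h := congrArg Prod.snd he
      have h1' : p.1 = s (A m i h) := by rw [← h1]; simp [hs]
      have h2' : p.2 = s (B m i h) := by rw [← h2]; simp [hs]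
      rw [hs, Equiv.swap_apply_left] at h1'
      rw [hs, Equiv.swap_apply_right] at h2'
      rw [h1', h2'] at hplt
      exact absurd (hab.trans hplt) (lt_irrefl _)
    · simpa [Equiv.Perm.mul_apply] using hpinv
  · intro p hp
    simp only [Finset.mem_erase, Finset.mem_filter, Finset.mem_univ, true_and] at hp ⊢
    obtain ⟨hpne, hplt, hpinv⟩ := hp
    have hne2 : ¬(p.1 = A m i h ∧ p.2 = B m i h) := by
      rintro ⟨h1, h2⟩; exact hpne (Prod.ext h1 h2)
    refine ⟨?_, swap_lt m i h hplt hne2, ?_⟩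
    · rintro he
      have h1 : s p.1 = A m i h := congrArg Prod.fst he
      have h2 : s p.2 = B m i h := congrArg Prod.snd he
      have h1' : p.1 = s (A m i h) := by rw [← h1]; simp [hs]
      have h2' : p.2 = s (B m i h) := by rw [← h2]; simp [hs]
      rw [hs, Equiv.swap_apply_left] at h1'
      rw [hs, Equiv.swap_apply_right] at h2'
      rw [h1', h2'] at hplt
      exact absurd (hab.trans hplt) (lt_irrefl _)
    · simpa [Equiv.Perm.mul_apply, hs] using hpinv
  · intro p _; simp only [hs, Equiv.swap_apply_self, Prod.mk.eta]
  · intro p _; simp only [hs, Equiv.swap_apply_self, Prod.mk.eta]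

theorem mem_ab_mul : ((A m i h, B m i h) ∈ Finset.univ.filter (fun p : Fin m × Fin m =>
      p.1 < p.2 ∧ (σ * Equiv.swap (A m i h) (B m i h)) p.2 <
        (σ * Equiv.swap (A m i h) (B m i h)) p.1)) ↔ σ (A m i h) < σ (B m i h) := by
  have hab : A m i h < B m i h := by simp [A, B, Fin.lt_iff_val_lt_val]
  rw [Finset.mem_filter]
  have e1 : (σ * Equiv.swap (A m i h) (B m i h)) (A m i h, B m i h).1 = σ (B m i h) := by
    simp [Equiv.Perm.mul_apply, Equiv.swap_apply_left]
  have e2 : (σ * Equiv.swap (A m i h) (B m i h)) (A m i h, B m i h).2 = σ (A m i h) := by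
    simp [Equiv.Perm.mul_apply, Equiv.swap_apply_right]
  rw [e1, e2]
  constructor
  · rintro ⟨_, _, hh⟩; exact hh
  · intro hh; exact ⟨Finset.mem_univ _, hab, hh⟩

theorem mem_ab : ((A m i h, B m i h) ∈ Finset.univ.filter (fun p : Fin m × Fin m =>
      p.1 < p.2 ∧ σ p.2 < σ p.1)) ↔ σ (B m i h) < σ (A m i h) := by
  have hab : A m i h < B m i h := by simp [A, B, Fin.lt_iff_val_lt_val]
  rw [Finset.mem_filter]
  constructor
  · rintro ⟨_, _, hh⟩; exact hh
  · intro hh; exact ⟨Finset.mem_univ _, hab, hh⟩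

theorem inv_mul_swap_of_asc (hasc : σ (A m i h) < σ (B m i h)) :
    inv m (σ * Equiv.swap (A m i h) (B m i h)) = inv m σ + 1 := by
  have hmem := (mem_ab_mul m i h σ).2 hasc
  have hnmem : ¬ ((A m i h, B m i h) ∈ Finset.univ.filter (fun p : Fin m × Fin m =>
      p.1 < p.2 ∧ σ p.2 < σ p.1)) := by
    rw [mem_ab]; exact fun hc => absurd (hasc.trans hc) (lt_irrefl _)
  have hcard := card_core m i h σ
  rw [Finset.erase_eq_of_notMem hnmem] at hcard
  unfold inv
  rw [← hcard, Finset.card_erase_of_mem hmem]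
  have : 0 < (Finset.univ.filter (fun p : Fin m × Fin m =>
      p.1 < p.2 ∧ (σ * Equiv.swap (A m i h) (B m i h)) p.2 <
        (σ * Equiv.swap (A m i h) (B m i h)) p.1)).card :=
    Finset.card_pos.2 ⟨_, hmem⟩
  omega

theorem inv_mul_swap_of_desc (hdesc : σ (B m i h) < σ (A m i h)) :
    inv m σ = inv m (σ * Equiv.swap (A m i h) (B m i h)) + 1 := by
  have hmem := (mem_ab m i h σ).2 hdesc
  have hnmem : ¬ ((A m i h, B m i h) ∈ Finset.univ.filter (fun p : Fin m × Fin m =>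
      p.1 < p.2 ∧ (σ * Equiv.swap (A m i h) (B m i h)) p.2 <
        (σ * Equiv.swap (A m i h) (B m i h)) p.1)) := by
    rw [mem_ab_mul]; exact fun hc => absurd (hdesc.trans hc) (lt_irrefl _)
  have hcard := card_core m i h σ
  rw [Finset.erase_eq_of_notMem hnmem] at hcard
  unfold inv
  rw [hcard, Finset.card_erase_of_mem hmem]
  have : 0 < (Finset.univ.filter (fun p : Fin m × Fin m =>
      p.1 < p.2 ∧ σ p.2 < σ p.1)).card := Finset.card_pos.2 ⟨_, hmem⟩
  omega

end swaplemmas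

theorem inv_mul_sNat_le (m i : ℕ) (σ : Equiv.Perm (Fin m)) :
    inv m (σ * sNat m i) ≤ inv m σ + 1 := by
  unfold sNat
  split
  · next h =>
    show inv m (σ * Equiv.swap (A m i h) (B m i h)) ≤ inv m σ + 1
    have hne : σ (A m i h) ≠ σ (B m i h) := by
      intro he
      have := σ.injective he
      simp [A, B, Fin.ext_iff] at this
    rcases lt_or_gt_of_ne hne with hasc | hdesc
    · rw [inv_mul_swap_of_asc m i h σ hasc]
    · rw [inv_mul_swap_of_desc m i h σ hdesc]; omega
  · simp

theorem inv_toPerm_le (m : ℕ) (l : List ℕ) : inv m (toPerm m l) ≤ l.length := by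
  induction l using List.reverseRecOn with
  | nil => simp [toPerm_nil, inv_one]
  | append_singleton l i ih =>
    rw [toPerm_append, toPerm_singleton]
    calc inv m (toPerm m l * sNat m i) ≤ inv m (toPerm m l) + 1 := inv_mul_sNat_le m i _
    _ ≤ l.length + 1 := by omega
    _ = (l ++ [i]).length := by simp

theorem le_apply' (m : ℕ) (f : Fin m → Fin m) (hf : StrictMono f) : ∀ x, x ≤ f x := by
  have key : ∀ v : ℕ, ∀ x : Fin m, (x : ℕ) = v → x ≤ f x := by
    intro v
    induction v using Nat.strong_induction_on with
    | _ v ih =>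
      intro x hx
      by_contra hc
      push_neg at hc
      have hvlt : ((f x : Fin m) : ℕ) < v := by
        rw [← hx]; exact hc
      have h1 : f x ≤ f (f x) := ih _ hvlt (f x) rfl
      have h2 : f (f x) < f x := hf hc
      exact absurd (h1.trans_lt h2) (lt_irrefl _)
  exact fun x => key (x : ℕ) x rfl

theorem eq_one_of_strictMono (m : ℕ) (σ : Equiv.Perm (Fin m)) (hmono : StrictMono σ) :
    σ = 1 := by
  have hmono' : StrictMono σ.symm := by
    intro x y hxy
    by_contra hc
    push_neg at hc
    have : y ≤ x := by
      calc y = σ (σ.symm y) := (σ.apply_symm_apply y).symm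
      _ ≤ σ (σ.symm x) := hmono.monotone hc
      _ = x := σ.apply_symm_apply x
    exact absurd hxy (not_lt.2 this)
  apply Equiv.ext
  intro x
  apply le_antisymm
  · have hh : σ x ≤ σ.symm (σ x) := le_apply' m _ hmono' (σ x)
    rwa [Equiv.symm_apply_apply] at hh
  · exact le_apply' m _ hmono x

theorem eq_one_of_inv_eq_zero (m : ℕ) (σ : Equiv.Perm (Fin m)) (h : inv m σ = 0) :
    σ = 1 := by
  apply eq_one_of_strictMono
  intro x y hxy
  by_contra hc
  push_neg at hc
  have hne : σ y ≠ σ x := fun he => absurd (σ.injective he) (ne_of_gt hxy)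
  have hlt : σ y < σ x := lt_of_le_of_ne hc hne
  rw [inv, Finset.card_eq_zero, Finset.filter_eq_empty_iff] at h
  exact h (Finset.mem_univ (x, y)) ⟨hxy, hlt⟩

theorem exists_descent (m : ℕ) (σ : Equiv.Perm (Fin m)) (h1 : σ ≠ 1) :
    ∃ i : ℕ, ∃ h : i + 1 < m, σ ⟨i + 1, h⟩ < σ ⟨i, by omega⟩ := by
  by_contra hc
  push_neg at hc
  apply h1
  apply eq_one_of_strictMono
  have step : ∀ (i : ℕ) (h : i + 1 < m), σ ⟨i, by omega⟩ < σ ⟨i + 1, h⟩ := by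
    intro i h
    have hle := hc i h
    have hne : σ (⟨i, by omega⟩ : Fin m) ≠ σ ⟨i + 1, h⟩ := by
      intro he
      have := σ.injective he
      simp [Fin.ext_iff] at this
    exact lt_of_le_of_ne hle hne
  have key : ∀ (d : ℕ) (x y : Fin m), (y : ℕ) = (x : ℕ) + d + 1 → σ x < σ y := by
    intro d
    induction d with
    | zero =>
      intro x y hy
      have h : (x : ℕ) + 1 < m := by omega
      have hx : x = ⟨(x : ℕ), x.2⟩ := rfl
      have hy' : y = ⟨(x : ℕ) + 1, h⟩ := Fin.ext (by simp only [Fin.val_mk]; omega)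
      rw [hy']
      exact step (x : ℕ) h
    | succ d ih =>
      intro x y hy
      have h : (x : ℕ) + 1 < m := by omega
      have := ih ⟨(x : ℕ) + 1, h⟩ y (by simp only [Fin.val_mk]; omega)
      exact (step (x : ℕ) h).trans this
  intro x y hxy
  exact key ((y : ℕ) - (x : ℕ) - 1) x y (by have : (x:ℕ) < y := hxy; omega)

theorem exists_word (m : ℕ) :
    ∀ (N : ℕ) (σ : Equiv.Perm (Fin m)), inv m σ ≤ N →
      ∃ l : List ℕ, toPerm m l = σ ∧ l.length = inv m σ := by
  intro N
  induction N with
  | zero =>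
    intro σ hσ
    have h0 : inv m σ = 0 := Nat.le_zero.mp hσ
    have : σ = 1 := eq_one_of_inv_eq_zero m σ h0
    subst this
    exact ⟨[], toPerm_nil m, by simp [inv_one]⟩
  | succ N ih =>
    intro σ hσ
    by_cases h1 : σ = 1
    · subst h1
      exact ⟨[], toPerm_nil m, by simp [inv_one]⟩
    · obtain ⟨i, h, hdesc⟩ := exists_descent m σ h1
      have hd := inv_mul_swap_of_desc m i h σ (by exact hdesc)
      have hle : inv m (σ * Equiv.swap (A m i h) (B m i h)) ≤ N := by omega
      obtain ⟨l, hl1, hl2⟩ := ih _ hle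
      refine ⟨l ++ [i], ?_, ?_⟩
      · rw [toPerm_append, toPerm_singleton, hl1]
        unfold sNat
        rw [dif_pos h]
        show σ * Equiv.swap (A m i h) (B m i h) * Equiv.swap (A m i h) (B m i h) = σ
        rw [mul_assoc, Equiv.swap_mul_self, mul_one]
      · simp [hl2]; omega

theorem isReduced_length (m : ℕ) (σ : Equiv.Perm (Fin m)) (l : List ℕ)
    (hl : IsReduced m l σ) : l.length = inv m σ := by
  obtain ⟨l', h1, h2⟩ := exists_word m (inv m σ) σ le_rfl
  refine le_antisymm (h2 ▸ hl.2 l' h1) ?_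
  have := inv_toPerm_le m l
  rw [hl.1] at this
  exact this

theorem toPerm_desc_word (n c : ℕ) (hc : c ≤ n - 1) (hn : 1 ≤ n) :
    (∀ x : Fin n, (x : ℕ) < n - 1 - c →
        toPerm n ((List.range c).map (fun t => n - 2 - t)) x = x) ∧
    toPerm n ((List.range c).map (fun t => n - 2 - t)) ⟨n - 1 - c, by omega⟩
      = ⟨n - 1, by omega⟩ := by
  induction c with
  | zero =>
    refine ⟨fun x hx => by simp [toPerm], ?_⟩
    simp [toPerm]
  | succ c ih =>
    have hc' : c ≤ n - 1 := by omega
    obtain ⟨ih1, ih2⟩ := ih hc'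
    have hrw : (List.range (c + 1)).map (fun t => n - 2 - t)
        = (List.range c).map (fun t => n - 2 - t) ++ [n - 2 - c] := by
      rw [List.range_succ, List.map_append]; simp
    have hlt : n - 2 - c + 1 < n := by omega
    have hsnat : sNat n (n - 2 - c)
        = Equiv.swap ⟨n - 2 - c, by omega⟩ ⟨n - 2 - c + 1, hlt⟩ := by
      unfold sNat; rw [dif_pos hlt]
    rw [hrw]
    constructor
    · intro x hx
      rw [toPerm_append, toPerm_singleton, hsnat, Equiv.Perm.mul_apply]
      have hx1 : x ≠ ⟨n - 2 - c, by omega⟩ := by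
        intro he; rw [Fin.ext_iff] at he; simp only [Fin.val_mk] at he; omega
      have hx2 : x ≠ ⟨n - 2 - c + 1, hlt⟩ := by
        intro he; rw [Fin.ext_iff] at he; simp only [Fin.val_mk] at he; omega
      rw [Equiv.swap_apply_of_ne_of_ne hx1 hx2]
      exact ih1 x (by omega)
    · rw [toPerm_append, toPerm_singleton, hsnat, Equiv.Perm.mul_apply]
      have e1 : (⟨n - 1 - (c + 1), by omega⟩ : Fin n) = ⟨n - 2 - c, by omega⟩ :=
        Fin.ext (by simp only [Fin.val_mk]; omega)
      rw [e1, Equiv.swap_apply_left]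
      have e2 : (⟨n - 2 - c + 1, hlt⟩ : Fin n) = ⟨n - 1 - c, by omega⟩ :=
        Fin.ext (by simp only [Fin.val_mk]; omega)
      rw [e2]
      exact ih2

theorem inv_mul_desc (n c : ℕ) (hc : c ≤ n - 1) (hn : 1 ≤ n) (π : Equiv.Perm (Fin n))
    (hm : ∀ j : Fin n, n - 1 - c ≤ (j : ℕ) → (j : ℕ) ≤ n - 2 → π j < π ⟨n - 1, by omega⟩) :
    inv n (π * toPerm n ((List.range c).map (fun t => n - 2 - t))) = inv n π + c := by
  induction c with
  | zero => simp [toPerm]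
  | succ c ihc =>
    have hc' : c ≤ n - 1 := by omega
    have ih := ihc hc' (fun j hj1 hj2 => hm j (by omega) hj2)
    have hrw : (List.range (c + 1)).map (fun t => n - 2 - t)
        = (List.range c).map (fun t => n - 2 - t) ++ [n - 2 - c] := by
      rw [List.range_succ, List.map_append]; simp
    have hlt : n - 2 - c + 1 < n := by omega
    have p1 : n - 2 - c < n := by omega
    have p2 : n - 1 < n := by omega
    have p3 : n - 1 - c < n := by omega
    have hsnat : sNat n (n - 2 - c)
        = Equiv.swap ⟨n - 2 - c, p1⟩ ⟨n - 2 - c + 1, hlt⟩ := by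
      unfold sNat; rw [dif_pos hlt]
    rw [hrw, toPerm_append, toPerm_singleton, hsnat, ← mul_assoc]
    have hdw := toPerm_desc_word n c hc' hn
    have ha : (π * toPerm n ((List.range c).map (fun t => n - 2 - t))) ⟨n - 2 - c, p1⟩
        = π ⟨n - 2 - c, p1⟩ := by
      rw [Equiv.Perm.mul_apply, hdw.1 ⟨n - 2 - c, p1⟩ (by simp only [Fin.val_mk]; omega)]
    have hx : (π * toPerm n ((List.range c).map (fun t => n - 2 - t))) ⟨n - 1 - c, p3⟩
        = π ⟨n - 1, p2⟩ := by
      rw [Equiv.Perm.mul_apply, hdw.2]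
    have e2 : (⟨n - 2 - c + 1, hlt⟩ : Fin n) = ⟨n - 1 - c, p3⟩ :=
      Fin.ext (by simp only [Fin.val_mk]; omega)
    have hb : (π * toPerm n ((List.range c).map (fun t => n - 2 - t))) ⟨n - 2 - c + 1, hlt⟩
        = π ⟨n - 1, p2⟩ := by
      rw [e2, hx]
    have hasc : (π * toPerm n ((List.range c).map (fun t => n - 2 - t))) ⟨n - 2 - c, p1⟩
        < (π * toPerm n ((List.range c).map (fun t => n - 2 - t))) ⟨n - 2 - c + 1, hlt⟩ := by
      rw [ha, hb]
      exact hm ⟨n - 2 - c, p1⟩ (by simp only [Fin.val_mk]; omega)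
        (by simp only [Fin.val_mk]; omega)
    have key : inv n (π * toPerm n ((List.range c).map (fun t => n - 2 - t))
          * Equiv.swap ⟨n - 2 - c, p1⟩ ⟨n - 2 - c + 1, hlt⟩)
        = inv n (π * toPerm n ((List.range c).map (fun t => n - 2 - t))) + 1 :=
      inv_mul_swap_of_asc n (n - 2 - c) hlt _ hasc
    rw [key, ih]
    omega


/-- Let `π ∈ S_n`, `1 ≤ k ≤ n−1`, with reduced decomposition
`(i_1,…,i_l)`, and suppose `π(j) < π(n)` for all `k ≤ j ≤ n−1` (1-based positions).
Then `(i_1,…,i_l, n−1, n−2, …, k)` is a reduced decomposition of `π s_{n−1} ⋯ s_k`.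
(Indices are 0-based, so the generator `s_j` of the paper corresponds to index `j−1`.) -/
theorem reduced_append_desc (n k : ℕ) (hk : 1 ≤ k) (hkn : k ≤ n - 1)
    (π : Equiv.Perm (Fin n)) (l : List ℕ) (hl : IsReduced n l π)
    (hmono : ∀ j : Fin n, k - 1 ≤ (j : ℕ) → (j : ℕ) ≤ n - 2 →
      π j < π ⟨n - 1, by omega⟩) :
    IsReduced n (l ++ (List.range (n - k)).map (fun t => n - 2 - t))
      (π * toPerm n ((List.range (n - k)).map (fun t => n - 2 - t))) := by
  have hn2 : 2 ≤ n := by omega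
  constructor
  · rw [toPerm_append, hl.1]
  · intro l' hl'
    have hcle : n - k ≤ n - 1 := by omega
    have hinv : inv n (π * toPerm n ((List.range (n - k)).map (fun t => n - 2 - t)))
        = inv n π + (n - k) := by
      apply inv_mul_desc n (n - k) hcle (by omega) π
      intro j hj1 hj2
      exact hmono j (by omega) hj2
    have h1 : inv n (π * toPerm n ((List.range (n - k)).map (fun t => n - 2 - t)))
        ≤ l'.length := by
      rw [← hl']; exact inv_toPerm_le n l'
    have h2 : l.length = inv n π := isReduced_length n π l hl
    have h3 : (l ++ (List.range (n - k)).map (fun t => n - 2 - t)).length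
        = l.length + (n - k) := by simp
    omega


end Stmt
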